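/- Consider on R^3 the quasilinear system u^i_t = V^i_j u^j_x + W^i with V = diag(0,0,0) except V^3_1 = −1 (i.e., V^1_j = V^2_j = 0, V^3_1 = −1, V^3_2 = V^3_3 = 0), W^1 = u^2, W^2 = u^3, W^3 = 6u^1 u^2, and the operator with degenerate leading coefficient g = diag(0, 0, −1), b^{ij}_k = 0, and ω^{12} = −1, ω^{23} = 6u^1, ω^{13} = 0 (ω skew-symmetric). Then all compatibility conditions of Theorem-type hold: (1) V^i_s g^{sj} = V^j_s g^{si}; (2) g^{is}(V^j_{s,k} − V^j_{k,s}) + b^{ij}_s V^s_k − b^{sj}_k V^i_s = 0; (3) g^{ij}_{,s} W^s − g^{js} W^i_{,s} − g^{is} W^j_{,s} − ω^{si} V^j_s − ω^{sj} V^i_s = 0; (4) W^i_{,s} ω^{sj} + W^j_{,s} ω^{is} + ω^{ji}_{,s} W^s = 0; (5) T^{ij}_k = 0, where T^{ij}_k = −g^{il} W^j_{,lk} + b^{ij}_{k,l} W^l + b^{ij}_l W^l_{,k} − b^{il}_k W^j_{,l} − b^{lj}_k W^i_{,l} − V^i_{k,s} ω^{sj} + ω^{is}(V^j_{s,k} −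 V^j_{k,s}) + ω^{ij}_{,s} V^s_k − ω^{sj}_{,k} V^i_s. -/
import Mathlib


open scoped BigOperators

noncomputable def pd {n : ℕ} (s : Fin n) (f : (Fin n → ℝ) → ℝ) (u : Fin n → ℝ) : ℝ :=
  fderiv ℝ f u (Pi.single s 1)

/-- KdV as a first-order quasilinear system: homogeneous part `V` (only `V^3_1 = −1`). -/
noncomputable def VKdV (u : Fin 3 → ℝ) : Fin 3 → Fin 3 → ℝ :=
  fun i j => !![0, 0, 0; 0, 0, 0; -1, 0, 0] i j

/-- Non-homogeneous part `W = (u^2, u^3, 6u^1u^2)`. -/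
noncomputable def WKdV (u : Fin 3 → ℝ) : Fin 3 → ℝ :=
  ![u 1, u 2, 6 * u 0 * u 1]

/-- Degenerate leading coefficient `g = diag(0,0,−1)`. -/
noncomputable def gKdVdeg (u : Fin 3 → ℝ) : Fin 3 → Fin 3 → ℝ :=
  fun i j => !![0, 0, 0; 0, 0, 0; 0, 0, -1] i j

/-- The coefficients `b^{ij}_k = 0`. -/
noncomputable def bKdVdeg (u : Fin 3 → ℝ) : Fin 3 → Fin 3 → Fin 3 → ℝ :=
  fun _ _ _ => 0

/-- Zeroth-order part: `ω^{12} = −1`, `ω^{13} = 0`, `ω^{23} = 6u^1`. -/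
noncomputable def ωKdVdeg (u : Fin 3 → ℝ) : Fin 3 → Fin 3 → ℝ :=
  fun i j => !![0, -1, 0; 1, 0, 6*u 0; 0, -6*u 0, 0] i j

/- ### Auxiliary lemmas on `pd` -/

lemma pd_const {n : ℕ} (s : Fin n) (c : ℝ) (u : Fin n → ℝ) : pd s (fun _ => c) u = 0 := by
  simp [pd]

lemma pd_coord {n : ℕ} (s i : Fin n) (u : Fin n → ℝ) :
    pd s (fun v => v i) u = (Pi.single s 1 : Fin n → ℝ) i := by
  unfold pd
  rw [show (fun v : Fin n → ℝ => v i) = (ContinuousLinearMap.proj (R := ℝ) (φ := fun _ : Fin n => ℝ) i) from rfl,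
    ContinuousLinearMap.fderiv]
  rfl

lemma pd_cmul {n : ℕ} (s i : Fin n) (c : ℝ) (u : Fin n → ℝ) :
    pd s (fun v => c * v i) u = c * (Pi.single s 1 : Fin n → ℝ) i := by
  unfold pd
  have h : HasFDerivAt (fun v : Fin n → ℝ => c * v i) (c • ContinuousLinearMap.proj i) u :=
    ((ContinuousLinearMap.proj (R := ℝ) (φ := fun _ : Fin n => ℝ) i).hasFDerivAt (x := u)).const_mul c
  rw [h.fderiv]
  simp

lemma pd_neg_cmul {n : ℕ} (s i : Fin n) (c : ℝ) (u : Fin n → ℝ) :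
    pd s (fun v => -(c * v i)) u = -(c * (Pi.single s 1 : Fin n → ℝ) i) := by
  unfold pd
  have h : HasFDerivAt (fun v : Fin n → ℝ => -(c * v i)) (-(c • ContinuousLinearMap.proj i)) u :=
    (((ContinuousLinearMap.proj (R := ℝ) (φ := fun _ : Fin n => ℝ) i).hasFDerivAt (x := u)).const_mul c).neg
  rw [h.fderiv]
  simp

lemma pd_mul2 (s : Fin 3) (u : Fin 3 → ℝ) :
    pd s (fun v => 6 * v 0 * v 1) u
      = 6 * u 0 * (Pi.single s 1 : Fin 3 → ℝ) 1 + u 1 * (6 * (Pi.single s 1 : Fin 3 → ℝ) 0) := by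
  unfold pd
  have h0 := (ContinuousLinearMap.proj (R := ℝ) (φ := fun _ : Fin 3 => ℝ) 0).hasFDerivAt (x := u)
  have h1 := (ContinuousLinearMap.proj (R := ℝ) (φ := fun _ : Fin 3 => ℝ) 1).hasFDerivAt (x := u)
  have h : HasFDerivAt (fun v : Fin 3 → ℝ => 6 * v 0 * v 1)
      ((6 * u 0) • ContinuousLinearMap.proj (R := ℝ) (φ := fun _ : Fin 3 => ℝ) 1
        + u 1 • (6:ℝ) • ContinuousLinearMap.proj (R := ℝ) (φ := fun _ : Fin 3 => ℝ) 0) u :=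
    (h0.const_mul 6).mul h1
  rw [h.fderiv]
  simp

lemma pdV (s i j : Fin 3) (u : Fin 3 → ℝ) : pd s (fun v => VKdV v i j) u = 0 := by
  have h : (fun v : Fin 3 → ℝ => VKdV v i j)
      = fun _ => (!![0, 0, 0; 0, 0, 0; -1, 0, 0] : Matrix (Fin 3) (Fin 3) ℝ) i j := rfl
  rw [h, pd_const]

lemma pdg (s i j : Fin 3) (u : Fin 3 → ℝ) : pd s (fun v => gKdVdeg v i j) u = 0 := by
  have h : (fun v : Fin 3 → ℝ => gKdVdeg v i j)
      = fun _ => (!![0, 0, 0; 0, 0, 0; 0, 0, -1] : Matrix (Fin 3) (Fin 3) ℝ) i j := rfl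
  rw [h, pd_const]

lemma pdb (s i j k : Fin 3) (u : Fin 3 → ℝ) : pd s (fun v => bKdVdeg v i j k) u = 0 := by
  have h : (fun v : Fin 3 → ℝ => bKdVdeg v i j k) = fun _ => (0:ℝ) := rfl
  rw [h, pd_const]

set_option maxHeartbeats 2000000 in
/-- The KdV system, written as a non-homogeneous first-order quasilinear system,
satisfies all five compatibility conditions with the degenerate non-homogeneous
operator of type `1+0`. -/
theorem kdv_degenerate_compatibility :
    -- (1) V^i_s g^{sj} = V^j_s g^{si}
    (∀ u : Fin 3 → ℝ, ∀ i j : Fin 3,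
      ∑ s, VKdV u i s * gKdVdeg u s j = ∑ s, VKdV u j s * gKdVdeg u s i)
    ∧
    -- (2) g^{is}(V^j_{s,k} − V^j_{k,s}) + b^{ij}_s V^s_k − b^{sj}_k V^i_s = 0
    (∀ u : Fin 3 → ℝ, ∀ i j k : Fin 3,
      ∑ s, (gKdVdeg u i s * (pd k (fun v => VKdV v j s) u - pd s (fun v => VKdV v j k) u)
          + bKdVdeg u i j s * VKdV u s k - bKdVdeg u s j k * VKdV u i s) = 0)
    ∧
    -- (3) g^{ij}_{,s} W^s − g^{js} W^i_{,s} − g^{is} W^j_{,s} − ω^{si} V^j_s − ω^{sj} V^i_s = 0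
    (∀ u : Fin 3 → ℝ, ∀ i j : Fin 3,
      ∑ s, (pd s (fun v => gKdVdeg v i j) u * WKdV u s
          - gKdVdeg u j s * pd s (fun v => WKdV v i) u
          - gKdVdeg u i s * pd s (fun v => WKdV v j) u
          - ωKdVdeg u s i * VKdV u j s - ωKdVdeg u s j * VKdV u i s) = 0)
    ∧
    -- (4) W^i_{,s} ω^{sj} + W^j_{,s} ω^{is} + ω^{ji}_{,s} W^s = 0
    (∀ u : Fin 3 → ℝ, ∀ i j : Fin 3,
      ∑ s, (pd s (fun v => WKdV v i) u * ωKdVdeg u s j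
          + pd s (fun v => WKdV v j) u * ωKdVdeg u i s
          + pd s (fun v => ωKdVdeg v j i) u * WKdV u s) = 0)
    ∧
    -- (5) T^{ij}_k = 0
    (∀ u : Fin 3 → ℝ, ∀ i j k : Fin 3,
      (- ∑ l, gKdVdeg u i l * pd k (fun v => pd l (fun w => WKdV w j) v) u)
      + (∑ l, pd l (fun v => bKdVdeg v i j k) u * WKdV u l)
      + (∑ l, bKdVdeg u i j l * pd k (fun v => WKdV v l) u)
      - (∑ l, bKdVdeg u i l k * pd l (fun v => WKdV v j) u)
      - (∑ l, bKdVdeg u l j k * pd l (fun v => WKdV v i) u)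
      - (∑ s, pd s (fun v => VKdV v i k) u * ωKdVdeg u s j)
      + (∑ s, ωKdVdeg u i s * (pd k (fun v => VKdV v j s) u - pd s (fun v => VKdV v j k) u))
      + (∑ s, pd s (fun v => ωKdVdeg v i j) u * VKdV u s k)
      - (∑ s, pd k (fun v => ωKdVdeg v s j) u * VKdV u i s) = 0) := by
  refine ⟨?_, ?_, ?_, ?_, ?_⟩
  · intro u i j
    fin_cases i <;> fin_cases j <;>
      simp [Fin.sum_univ_three, VKdV, gKdVdeg]
  · intro u i j k
    fin_cases i <;> fin_cases j <;> fin_cases k <;>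
      simp [Fin.sum_univ_three, VKdV, gKdVdeg, bKdVdeg, Matrix.vecHead, Matrix.vecTail,
        pd_const, pd_coord, pd_cmul, pd_neg_cmul, pd_mul2, Pi.single_apply] <;> try ring
  · intro u i j
    fin_cases i <;> fin_cases j <;>
      simp [Fin.sum_univ_three, VKdV, WKdV, gKdVdeg, ωKdVdeg, Matrix.vecHead, Matrix.vecTail,
        pd_const, pd_coord, pd_cmul, pd_neg_cmul, pd_mul2, Pi.single_apply] <;> try ring
  · intro u i j
    fin_cases i <;> fin_cases j <;>
      simp [Fin.sum_univ_three, WKdV, ωKdVdeg, Matrix.vecHead, Matrix.vecTail,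
        pd_const, pd_coord, pd_cmul, pd_neg_cmul, pd_mul2, Pi.single_apply] <;> try ring
  · intro u i j k
    fin_cases i <;> fin_cases j <;> fin_cases k <;>
      simp [Fin.sum_univ_three, VKdV, WKdV, gKdVdeg, bKdVdeg, ωKdVdeg, Matrix.vecHead,
        Matrix.vecTail, pd_const, pd_coord, pd_cmul, pd_neg_cmul, pd_mul2,
        Pi.single_apply] <;> try ring
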